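/- arXiv:1709.03663 — 7 statements merged into one kernel-verified Lean document; each statement's English description precedes it below -/
import Mathlib

section
/- A linear threshold function f on n variables is Semi-Goldilocks (i.e., it has a positive realization and it has a small realization) if and only if it has a single realization (w, θ) that is simultaneously positive and small, i.e., 0 < w_i ≤ θ for all i. -/
/-- Dot product of a rational weight vector with a 0-1 boolean vector. -/
def dotProd {n : ℕ} (w : Fin n → ℚ) (x : Fin n → Bool) : ℚ :=
  ∑ i, if x i then w i else 0

/-- `(w, θ)` is a realization of the boolean function `f`. -/
def IsRealization {n : ℕ} (f : (Fin n → Bool) → Bool) (w : Fin n → ℚ) (θ : ℚ) : Prop :=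
  ∀ x, f x = true ↔ θ < dotProd w x

/-- `f` is a linear threshold function. -/
def IsLTF {n : ℕ} (f : (Fin n → Bool) → Bool) : Prop :=
  ∃ w θ, IsRealization f w θ

lemma dotProd_single {n : ℕ} (w : Fin n → ℚ) (i : Fin n) :
    dotProd w (fun j => decide (j = i)) = w i := by
  unfold dotProd
  simp [Finset.sum_ite_eq']

/-- An LTF is Semi-Goldilocks (has a positive realization and a small realization) iff
it has a single realization that is simultaneously positive and small. -/
theorem stmt_1 (n : ℕ) (f : (Fin n → Bool) → Bool) (hf : IsLTF f) :
    ((∃ w θ, IsRealization f w θ ∧ ∀ i, 0 < w i) ∧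
        (∃ w θ, IsRealization f w θ ∧ ∀ i, w i ≤ θ)) ↔
      ∃ w θ, IsRealization f w θ ∧ ∀ i, 0 < w i ∧ w i ≤ θ := by
  constructor
  · rintro ⟨⟨w, θ, hr, hpos⟩, ⟨w', θ', hr', hsmall⟩⟩
    refine ⟨w, θ, hr, fun i => ⟨hpos i, ?_⟩⟩
    have hfe : f (fun j => decide (j = i)) ≠ true := by
      intro h
      have := (hr' _).mp h
      rw [dotProd_single] at this
      exact absurd this (not_lt.mpr (hsmall i))
    have := (hr (fun j => decide (j = i)))
    rw [dotProd_single] at this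
    exact not_lt.mp (fun h => hfe (this.mpr h))
  · rintro ⟨w, θ, hr, h⟩
    exact ⟨⟨w, θ, hr, fun i => (h i).1⟩, ⟨w, θ, hr, fun i => (h i).2⟩⟩
end

section
/- (Amplification) Let f be a linear threshold function on n variables such that f(x) = 0 implies f(x̄) = 1 for all x ∈ {0,1}^n (f is ample), and let (w, θ) be any realization of f. Then there exists θ' ∈ ℚ with θ' ≤ θ such that (w, θ') is also a realization of f and Σ_{i=1}^n w_i > 2θ'. -/
lemma dotProd_neg {n : ℕ} (w : Fin n → ℚ) (x : Fin n → Bool) :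
    dotProd w (fun i => !(x i)) = (∑ i, w i) - dotProd w x := by
  unfold dotProd
  rw [← Finset.sum_sub_distrib]
  apply Finset.sum_congr rfl
  intro i _
  by_cases hxi : x i = true <;> simp [hxi]

/-- Amplification: any realization of an ample LTF can be amplified to an ample
realization with the same weight vector and a smaller bias. -/
theorem stmt_5 (n : ℕ) (f : (Fin n → Bool) → Bool)
    (hample : ∀ x, f x = false → f (fun i => !(x i)) = true)
    (w : Fin n → ℚ) (θ : ℚ) (hr : IsRealization f w θ) :
    ∃ θ' : ℚ, θ' ≤ θ ∧ IsRealization f w θ' ∧ 2 * θ' < ∑ i, w i := by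
  set S := ∑ i, w i with hS
  by_cases h : ∃ x, dotProd w x ≤ θ
  · -- take θ' = max of dotProd over {x | dotProd w x ≤ θ}
    have hne : (Finset.univ.filter (fun x : Fin n → Bool => dotProd w x ≤ θ)).Nonempty := by
      obtain ⟨x, hx⟩ := h
      exact ⟨x, by simp [hx]⟩
    obtain ⟨x0, hx0mem, hx0max⟩ := Finset.exists_max_image _ (dotProd w) hne
    simp only [Finset.mem_filter, Finset.mem_univ, true_and] at hx0mem
    refine ⟨dotProd w x0, hx0mem, ?_, ?_⟩
    · intro x
      rw [hr x]
      constructor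
      · intro hx
        by_contra hle
        push_neg at hle
        exact absurd hx (not_lt.mpr (le_trans hle hx0mem))
      · intro hx
        by_contra hle
        push_neg at hle
        exact absurd (hx0max x (by simp [hle])) (not_le.mpr hx)
    · -- ample: f x0 = false, so f x̄0 true, so θ < S - dotProd w x0
      have hfx0 : f x0 = false := by
        rcases Bool.eq_false_or_eq_true (f x0) with h' | h'
        · exact absurd ((hr x0).mp h') (not_lt.mpr hx0mem)
        · exact h'
      have := (hr _).mp (hample x0 hfx0)
      rw [dotProd_neg] at this
      have : θ < S - dotProd w x0 := this
      linarith [hx0mem]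
  · push_neg at h
    refine ⟨min θ (S / 2 - 1), min_le_left _ _, ?_, ?_⟩
    · intro x
      constructor
      · intro _
        exact lt_of_le_of_lt (min_le_left _ _) (h x)
      · intro _
        exact (hr x).mpr (h x)
    · have : min θ (S / 2 - 1) ≤ S / 2 - 1 := min_le_right _ _
      linarith
end

section
/- Let f be a linear threshold function on n variables. Then f has a realization (w, θ) with w_i > 0 for all i if and only if f is monotone in each coordinate, i.e., f(x_1,…,x_{i−1},1,x_{i+1},…,x_n) ≥ f(x_1,…,x_{i−1},0,x_{i+1},…,x_n) for all i and all choices of the remaining coordinates. -/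
lemma dot_update {n : ℕ} (w : Fin n → ℚ) (x : Fin n → Bool) (i : Fin n) (b : Bool) :
    dotProd w (Function.update x i b) =
      (if b then w i else 0) + ∑ j ∈ Finset.univ.erase i, (if x j then w j else 0) := by
  unfold dotProd
  rw [← Finset.add_sum_erase _ _ (Finset.mem_univ i)]
  congr 1
  · simp
  · exact Finset.sum_congr rfl fun j hj => by
      rw [Function.update_of_ne (Finset.ne_of_mem_erase hj)]

lemma mono_of_coord {n : ℕ} (f : (Fin n → Bool) → Bool)
    (h : ∀ (i : Fin n) (x : Fin n → Bool),
      f (Function.update x i false) ≤ f (Function.update x i true)) :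
    ∀ x y : Fin n → Bool, (∀ i, x i ≤ y i) → f x ≤ f y := by
  suffices H : ∀ s : Finset (Fin n), ∀ x y : Fin n → Bool, (∀ i, x i ≤ y i) →
      (∀ i, i ∉ s → x i = y i) → f x ≤ f y by
    intro x y hxy
    exact H Finset.univ x y hxy (fun i hi => absurd (Finset.mem_univ i) hi)
  intro s
  induction s using Finset.induction_on with
  | empty =>
    intro x y hxy he
    have : x = y := funext fun i => he i (Finset.notMem_empty i)
    rw [this]
  | @insert i s hi ih =>
    intro x y hxy he
    have h1 : f x ≤ f (Function.update y i (x i)) := by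
      apply ih
      · intro j
        by_cases hj : j = i
        · subst hj; simp
        · rw [Function.update_of_ne hj]; exact hxy j
      · intro j hj
        by_cases hji : j = i
        · subst hji; simp
        · rw [Function.update_of_ne hji]
          exact he j (by simp [hj, hji])
    refine le_trans h1 ?_
    by_cases hxi : x i = y i
    · rw [hxi, Function.update_eq_self]
    · have hx : x i = false := by
        cases hxt : x i
        · rfl
        · exact absurd (hxy i hxt) fun hy => hxi (hxt.trans hy.symm)
      have hy : y i = true := by
        cases hyt : y i
        · exact absurd (hx.trans hyt.symm) hxi
        · rfl
      rw [hx]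
      calc f (Function.update y i false) ≤ f (Function.update y i true) := h i y
        _ = f y := by rw [← hy, Function.update_eq_self]

/-- An LTF has a positive realization iff it is monotone in each coordinate. -/
theorem stmt_6 (n : ℕ) (f : (Fin n → Bool) → Bool) (hf : IsLTF f) :
    (∃ w θ, IsRealization f w θ ∧ ∀ i, 0 < w i) ↔
      ∀ (i : Fin n) (x : Fin n → Bool),
        f (Function.update x i false) ≤ f (Function.update x i true) := by
  constructor
  · rintro ⟨w, θ, hw, hpos⟩ i x
    cases hfx : f (Function.update x i false)
    · exact Bool.false_le _
    · have h1 := (hw _).mp hfx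
      have h2 : θ < dotProd w (Function.update x i true) := by
        rw [dot_update] at h1 ⊢
        rw [if_neg (by simp : ¬ (false = true))] at h1
        rw [if_pos rfl]
        linarith [hpos i]
      simp [(hw _).mpr h2]
  · intro h
    obtain ⟨w, θ, hw⟩ := hf
    have mono := mono_of_coord f h
    set gaps : Finset ℚ :=
      insert 1 ((Finset.univ.filter (fun x : Fin n → Bool => f x = true)).image
        (fun x => dotProd w x - θ)) with hgaps
    have hne : gaps.Nonempty := ⟨1, Finset.mem_insert_self _ _⟩
    set δ := gaps.min' hne with hδ
    have hδpos : 0 < δ := by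
      have hm : δ ∈ gaps := gaps.min'_mem hne
      rcases Finset.mem_insert.mp hm with h1 | h2
      · rw [h1]; norm_num
      · obtain ⟨x, hx, hxe⟩ := Finset.mem_image.mp h2
        have := (hw x).mp (Finset.mem_filter.mp hx).2
        rw [← hxe]; linarith
    have hδle : ∀ x, f x = true → δ ≤ dotProd w x - θ := by
      intro x hx
      apply Finset.min'_le
      exact Finset.mem_insert_of_mem (Finset.mem_image.mpr
        ⟨x, Finset.mem_filter.mpr ⟨Finset.mem_univ x, hx⟩, rfl⟩)
    set ε : ℚ := δ / (2 * (n + 1)) with hε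
    have hεpos : 0 < ε := by
      apply div_pos hδpos; positivity
    have hnε : (n : ℚ) * ε < δ := by
      have hn0 : (0:ℚ) ≤ (n:ℚ) := Nat.cast_nonneg n
      rw [hε, mul_div_assoc', div_lt_iff₀ (by positivity)]
      nlinarith
    refine ⟨fun i => if 0 < w i then w i else ε, θ + n * ε, ?_, ?_⟩
    · intro x
      constructor
      · intro hx
        have h1 : θ + δ ≤ dotProd w x := by linarith [hδle x hx, (hw x).mp hx]
        have h2 : dotProd w x ≤ dotProd (fun i => if 0 < w i then w i else ε) x := by
          unfold dotProd
          apply Finset.sum_le_sum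
          intro j _
          by_cases hxj : x j = true
          · simp only [hxj, if_true]
            by_cases hwj : 0 < w j
            · rw [if_pos hwj]
            · rw [if_neg hwj]; push_neg at hwj; linarith
          · have hxjf : x j = false := by cases hxx : x j <;> simp_all
            simp [hxjf]
        linarith
      · intro hx
        by_contra hfx
        have hfx' : f x = false := Bool.eq_false_iff.mpr hfx
        set x' : Fin n → Bool := fun j => x j && decide (0 < w j) with hx'
        have hle : f x' ≤ f x := by
          apply mono
          intro i
          rw [hx']
          cases hxi : x i <;> simp [hxi]
        have hfx'2 : f x' = false := by
          cases hxx : f x'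
          · rfl
          · rw [hxx, hfx'] at hle
            exact absurd (hle rfl) (by simp)
        have hd' : dotProd w x' ≤ θ := by
          by_contra hc
          push_neg at hc
          have := (hw x').mpr hc
          rw [hfx'2] at this; exact Bool.false_ne_true this
        have hkey : dotProd (fun i => if 0 < w i then w i else ε) x ≤
            dotProd w x' + n * ε := by
          have hterm : dotProd (fun i => if 0 < w i then w i else ε) x ≤
              ∑ j : Fin n, ((if x' j then w j else 0) + ε) := by
            unfold dotProd
            apply Finset.sum_le_sum
            intro j _
            dsimp only
            by_cases hxj : x j = true
            · rw [if_pos hxj]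
              by_cases hwj : 0 < w j
              · have hx'j : x' j = true := by rw [hx']; simp [hxj, hwj]
                rw [if_pos hwj, if_pos hx'j]; linarith
              · have hx'j : ¬ x' j = true := by rw [hx']; simp [hwj]
                rw [if_neg hwj, if_neg hx'j]; linarith
            · have hx'j : ¬ x' j = true := by
                rw [hx']; simp only [Bool.and_eq_true]; exact fun hc => hxj hc.1
              rw [if_neg hxj, if_neg hx'j]; linarith
          rw [Finset.sum_add_distrib, Finset.sum_const, Finset.card_univ,
            Fintype.card_fin, nsmul_eq_mul] at hterm
          exact hterm
        linarith
    · intro i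
      dsimp only
      split
      · assumption
      · exact hεpos
end

section
/- Let f be a linear threshold function on n variables. Then f is ample (i.e., f(x) = 0 implies f(x̄) = 1 for all x ∈ {0,1}^n) if and only if the cardinality of its true set satisfies |f^{−1}(1)| ≥ 2^{n−1}. -/
private lemma neg_invol (n : ℕ) : Function.Involutive (fun (x : Fin n → Bool) i => !(x i)) := by
  intro x; funext i; simp

private lemma dot_add_neg {n : ℕ} (w : Fin n → ℚ) (x : Fin n → Bool) :
    dotProd w x + dotProd w (fun i => !(x i)) = ∑ i, w i := by
  unfold dotProd
  rw [← Finset.sum_add_distrib]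
  exact Finset.sum_congr rfl fun i _ => by cases h : x i <;> simp [h]

private lemma card_TF {n : ℕ} (f : (Fin n → Bool) → Bool) :
    (Finset.univ.filter fun x : Fin n → Bool => f x = true).card +
    (Finset.univ.filter fun x : Fin n → Bool => f x = false).card = 2 ^ n := by
  classical
  have h := Finset.card_filter_add_card_filter_not
    (s := (Finset.univ : Finset (Fin n → Bool))) (p := fun x => f x = true)
  have h2 : (Finset.univ.filter fun x : Fin n → Bool => ¬ f x = true) =
      (Finset.univ.filter fun x : Fin n → Bool => f x = false) := by
    apply Finset.filter_congr; intro x _; simp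
  rw [h2] at h
  rw [h]
  simp [Finset.card_univ]

/-- An LTF is ample iff its true set has cardinality at least `2^(n-1)`. -/
theorem stmt_10 (n : ℕ) (f : (Fin n → Bool) → Bool) (hf : IsLTF f) :
    (∀ x, f x = false → f (fun i => !(x i)) = true) ↔
      2 ^ (n - 1) ≤ (Finset.univ.filter fun x : Fin n → Bool => f x = true).card := by
  classical
  obtain ⟨w, θ, hw⟩ := hf
  set T := (Finset.univ.filter fun x : Fin n → Bool => f x = true) with hT
  set F := (Finset.univ.filter fun x : Fin n → Bool => f x = false) with hF
  have htot : T.card + F.card = 2 ^ n := card_TF f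
  constructor
  · intro hamp
    -- F injects into T via negation
    have hle : F.card ≤ T.card := by
      apply Finset.card_le_card_of_injOn (fun x i => !(x i))
      · intro x hx
        simp only [hF, Finset.mem_coe, Finset.mem_filter, Finset.mem_univ, true_and] at hx
        simp only [hT, Finset.mem_coe, Finset.mem_filter, Finset.mem_univ, true_and]
        exact hamp x hx
      · exact Function.Injective.injOn (neg_invol n).injective
    rcases n with _ | m
    · simp only [Nat.zero_sub, pow_zero] at *
      omega
    · have : 2 ^ (m + 1) = 2 * 2 ^ m := by ring
      simp only [Nat.add_sub_cancel]
      omega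
  · intro hcard x hx
    by_contra hxb
    have hxbar : f (fun i => !(x i)) = false := by
      cases h : f (fun i => !(x i)) with
      | false => rfl
      | true => exact absurd h hxb
    -- both x and x̄ false: 2θ ≥ ∑ w
    have h1 : dotProd w x ≤ θ := by
      by_contra h; exact absurd ((hw x).mpr (lt_of_not_ge h)) (by simp [hx])
    have h2 : dotProd w (fun i => !(x i)) ≤ θ := by
      by_contra h
      exact absurd ((hw _).mpr (lt_of_not_ge h)) (by simp [hxbar])
    have hsum : (∑ i, w i) ≤ θ + θ := by
      rw [← dot_add_neg w x]; exact add_le_add h1 h2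
    -- then T maps into F via negation
    have hTF : ∀ y : Fin n → Bool, f y = true → f (fun i => !(y i)) = false := by
      intro y hy
      have hy' : θ < dotProd w y := (hw y).mp hy
      have : dotProd w (fun i => !(y i)) ≤ θ := by
        have := dot_add_neg w y
        linarith
      cases h : f (fun i => !(y i)) with
      | false => rfl
      | true =>
          have := (hw _).mp h
          linarith
    set T' := T.image (fun (y : Fin n → Bool) i => !(y i)) with hT'
    have hcardT' : T'.card = T.card :=
      Finset.card_image_of_injective _ (neg_invol n).injective
    have hT'F : T' ⊆ F := by
      intro z hz
      simp only [hT', Finset.mem_image] at hz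
      obtain ⟨y, hy, rfl⟩ := hz
      simp only [hT, Finset.mem_filter, Finset.mem_univ, true_and] at hy
      simp only [hF, Finset.mem_filter, Finset.mem_univ, true_and]
      exact hTF y hy
    have hxF : x ∈ F := by
      simp only [hF, Finset.mem_filter, Finset.mem_univ, true_and]; exact hx
    have hxnT' : x ∉ T' := by
      intro hmem
      simp only [hT', Finset.mem_image] at hmem
      obtain ⟨y, hy, heq⟩ := hmem
      simp only [hT, Finset.mem_filter, Finset.mem_univ, true_and] at hy
      have : y = fun i => !(x i) := by
        rw [← heq]; exact ((neg_invol n) y).symm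
      rw [this] at hy
      rw [hy] at hxbar
      exact Bool.noConfusion hxbar
    rcases n with _ | m
    · -- n = 0 : T.card ≥ 1 but also F ⊇ insert x T', card ≥ T.card + 1, total = 1
      have : insert x T' ⊆ F := Finset.insert_subset hxF hT'F
      have hc := Finset.card_le_card this
      rw [Finset.card_insert_of_notMem hxnT', hcardT'] at hc
      simp only [Nat.zero_sub, pow_zero] at hcard htot
      omega
    · have hxne : x ≠ (fun i => !(x i)) := by
        intro h
        have := congrFun h 0
        simp at this
      have hxbF : (fun i => !(x i)) ∈ F := by
        simp only [hF, Finset.mem_filter, Finset.mem_univ, true_and]; exact hxbar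
      have hxbnT' : (fun i => !(x i)) ∉ T' := by
        intro hmem
        simp only [hT', Finset.mem_image] at hmem
        obtain ⟨y, hy, heq⟩ := hmem
        simp only [hT, Finset.mem_filter, Finset.mem_univ, true_and] at hy
        have : y = x := by
          have := congrArg (fun z (i : Fin (m+1)) => !(z i)) heq
          simp only [neg_invol _ y, neg_invol _ x] at this
          exact this
        rw [this] at hy
        rw [hy] at hx
        exact Bool.noConfusion hx
      have hsub : insert x (insert (fun i => !(x i)) T') ⊆ F := by
        apply Finset.insert_subset hxF
        exact Finset.insert_subset hxbF hT'F
      have hc := Finset.card_le_card hsub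
      rw [Finset.card_insert_of_notMem (by
            simp only [Finset.mem_insert]
            push_neg
            exact ⟨hxne, hxnT'⟩),
          Finset.card_insert_of_notMem hxbnT', hcardT'] at hc
      have hpow : 2 ^ (m + 1) = 2 * 2 ^ m := by ring
      simp only [Nat.add_sub_cancel] at hcard
      omega
end

section
/- Let f be a linear threshold function on n variables that is positive (monotone in each coordinate) and ample (f(x) = 0 implies f(x̄) = 1 for all x). If f is not self-dual (f ≠ f^d), then the dual f^d is small, i.e., f^d(ê_i) = 0 for every standard basis vector ê_i. -/
/-- If `f` is a positive ample LTF which is not self-dual, then its dual is small. -/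
theorem stmt_13 (n : ℕ) (f : (Fin n → Bool) → Bool) (hf : IsLTF f)
    (hpos : ∀ x y : Fin n → Bool, (∀ i, x i ≤ y i) → f x ≤ f y)
    (hample : ∀ x, f x = false → f (fun i => !(x i)) = true)
    (hnsd : f ≠ fun x => !(f fun i => !(x i))) :
    ∀ i : Fin n, (!(f fun j => !(decide (j = i)))) = false := by
  intro i
  obtain ⟨x, hx⟩ := Function.ne_iff.mp hnsd
  have hx' : f x = f (fun j => !(x j)) := by
    revert hx
    cases h1 : f x <;> cases h2 : f (fun j => !(x j)) <;> simp [h1, h2]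
  have htrue : f x = true := by
    cases h : f x with
    | false =>
        have h2 := hample x h
        rw [hx', h2] at h
        exact h.symm
    | true => rfl
  have htrue2 : f (fun j => !(x j)) = true := hx' ▸ htrue
  simp only [Bool.not_eq_false']
  cases hxi : x i with
  | false =>
      have hle := hpos x (fun j => !(decide (j = i))) ?_
      · rw [htrue] at hle; exact le_antisymm (Bool.le_true _) hle
      · intro j
        by_cases hj : j = i
        · subst hj; rw [hxi]; exact Bool.false_le _
        · simp [hj]
  | true =>
      have hle := hpos (fun j => !(x j)) (fun j => !(decide (j = i))) ?_
      · rw [htrue2] at hle; exact le_antisymm (Bool.le_true _) hle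
      · intro j
        by_cases hj : j = i
        · subst hj; simp [hxi]
        · simp [hj]
end

section
/- For every n, the number of Semi-Goldilocks linear threshold functions on n variables equals the number of linear threshold functions on n variables that are positive (monotone in each coordinate) and nondegenerate (depend on every coordinate). -/
/-- `f` depends on its `i`-th coordinate. -/
def DependsOnCoord {n : ℕ} (f : (Fin n → Bool) → Bool) (i : Fin n) : Prop :=
  ∃ x : Fin n → Bool, f (Function.update x i true) ≠ f (Function.update x i false)

/-- `f` is Semi-Goldilocks: an LTF with a positive realization and a small realization. -/
def SemiGoldilocks {n : ℕ} (f : (Fin n → Bool) → Bool) : Prop :=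
  IsLTF f ∧ (∃ w θ, IsRealization f w θ ∧ ∀ i, 0 < w i) ∧
    (∃ w θ, IsRealization f w θ ∧ ∀ i, w i ≤ θ)

namespace Stmt18

variable {n : ℕ}

def unitB (i : Fin n) : Fin n → Bool := fun j => if j = i then true else false

def Mono (f : (Fin n → Bool) → Bool) : Prop :=
  ∀ x y : Fin n → Bool, (∀ i, x i ≤ y i) → f x ≤ f y

lemma bool_le_of_imp {a b : Bool} (h : a = true → b = true) : a ≤ b := by
  cases a
  · exact Bool.false_le b
  · rw [h rfl]

lemma eq_true_of_le {a b : Bool} (h : a ≤ b) (ha : a = true) : b = true := by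
  subst ha; cases b
  · exact absurd h (by decide)
  · rfl

lemma dot_unit (w : Fin n → ℚ) (i : Fin n) : dotProd w (unitB i) = w i := by
  unfold dotProd unitB
  simp [Finset.sum_ite_eq']

section mask

open Classical in
noncomputable def maskOff (P : Fin n → Prop) (x : Fin n → Bool) : Fin n → Bool :=
  fun j => if P j then false else x j

lemma indep_update {f : (Fin n → Bool) → Bool} {i : Fin n} (h : ¬ DependsOnCoord f i)
    (x : Fin n → Bool) (b : Bool) : f (Function.update x i b) = f x := by
  unfold DependsOnCoord at h
  push_neg at h
  have key : ∀ b b' : Bool, f (Function.update x i b) = f (Function.update x i b') := by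
    intro b b'
    cases b <;> cases b' <;> first | rfl | exact (h x).symm | exact h x
  calc f (Function.update x i b) = f (Function.update x i (x i)) := key b (x i)
    _ = f x := by rw [Function.update_eq_self]

lemma f_maskF {f : (Fin n → Bool) → Bool} (s : Finset (Fin n))
    (h : ∀ i ∈ s, ¬ DependsOnCoord f i) (x : Fin n → Bool) :
    f (fun j => if j ∈ s then false else x j) = f x := by
  classical
  induction s using Finset.induction_on with
  | empty => simp
  | @insert i s hnotmem ih =>
    have hmask : (fun j => if j ∈ insert i s then false else x j)
        = Function.update (fun j => if j ∈ s then false else x j) i false := by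
      funext j
      by_cases hji : j = i
      · subst hji; simp
      · simp [Function.update_apply, hji, Finset.mem_insert]
    rw [hmask, indep_update (h i (Finset.mem_insert_self i s)),
      ih (fun j hj => h j (Finset.mem_insert_of_mem hj))]

lemma f_maskOff {f : (Fin n → Bool) → Bool} {P : Fin n → Prop}
    (h : ∀ i, P i → ¬ DependsOnCoord f i) (x : Fin n → Bool) :
    f (maskOff P x) = f x := by
  classical
  have hmask : maskOff P x = fun j => if j ∈ Finset.univ.filter P then false else x j := by
    funext j; simp [maskOff]
  rw [hmask, f_maskF _ (fun i hi => h i (by simpa using hi))]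

end mask

/-- From a realization of a monotone function, get a nonnegative realization. -/
lemma real_nonneg {f : (Fin n → Bool) → Bool} {w : Fin n → ℚ} {θ : ℚ}
    (hf : Mono f) (hr : IsRealization f w θ) :
    ∃ w', IsRealization f w' θ ∧ ∀ i, 0 ≤ w' i := by
  classical
  refine ⟨fun i => max (w i) 0, ?_, fun i => le_max_right _ _⟩
  intro x
  set x' : Fin n → Bool := fun i => x i && decide (0 ≤ w i) with hx'
  have hdot : dotProd (fun i => max (w i) 0) x = dotProd w x' := by
    unfold dotProd
    refine Finset.sum_congr rfl fun i _ => ?_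
    by_cases hw : 0 ≤ w i
    · cases hxi : x i <;> simp [hx', hxi, hw, max_eq_left hw]
    · cases hxi : x i <;> simp [hx', hxi, hw, max_eq_right (le_of_not_ge hw)]
  have hle : dotProd w x ≤ dotProd w x' := by
    unfold dotProd
    refine Finset.sum_le_sum fun i _ => ?_
    by_cases hw : 0 ≤ w i
    · cases hxi : x i <;> simp [hx', hxi, hw]
    · cases hxi : x i <;> simp [hx', hxi, hw, le_of_not_ge hw]
  have hxle : ∀ i, x' i ≤ x i := by
    intro i
    cases hxi : x i <;> simp [hx', hxi]
  constructor
  · intro hfx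
    rw [hdot]
    exact lt_of_lt_of_le ((hr x).mp hfx) hle
  · intro hlt
    rw [hdot] at hlt
    exact eq_true_of_le (hf x' x hxle) ((hr x').mpr hlt)

/-- From a nonnegative realization, get a strictly positive realization. -/
lemma real_pos {f : (Fin n → Bool) → Bool} {w : Fin n → ℚ} {θ : ℚ}
    (hr : IsRealization f w θ) (hw : ∀ i, 0 ≤ w i) :
    ∃ w' θ', IsRealization f w' θ' ∧ ∀ i, 0 < w' i := by
  classical
  by_cases hS : ∃ x, f x = true
  · obtain ⟨x0, hx0⟩ := hS
    set S : Finset (Fin n → Bool) := Finset.univ.filter (fun x => f x = true) with hSdef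
    have hne : S.Nonempty := ⟨x0, by simp [hSdef, hx0]⟩
    set m : ℚ := S.inf' hne (fun x => dotProd w x - θ) with hm
    have hm0 : 0 < m := by
      rw [hm, Finset.lt_inf'_iff]
      intro x hx
      have : f x = true := by simpa [hSdef] using hx
      have := (hr x).mp this
      linarith
    set ε : ℚ := m / (n + 1) with hε
    have hε0 : 0 < ε := by positivity
    have hnε : (n : ℚ) * ε < m := by
      rw [hε, mul_div_assoc']
      rw [div_lt_iff₀ (by positivity : (0:ℚ) < (n:ℚ) + 1)]
      nlinarith
    refine ⟨fun i => w i + ε, θ + n * ε, ?_, fun i => by have h1 := hw i; show (0:ℚ) < w i + ε; linarith⟩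
    intro x
    have hdot : dotProd (fun i => w i + ε) x = dotProd w x + ∑ i, (if x i then ε else 0) := by
      unfold dotProd
      rw [← Finset.sum_add_distrib]
      refine Finset.sum_congr rfl fun i _ => ?_
      cases hxi : x i <;> simp [hxi]
    set cx : ℚ := ∑ i, (if x i then ε else 0) with hcx
    have hc0 : 0 ≤ cx := Finset.sum_nonneg fun i _ => by positivity
    have hcn : cx ≤ n * ε := by
      have : cx ≤ ∑ _i : Fin n, ε := Finset.sum_le_sum fun i _ => by
        cases hxi : x i <;> simp [hxi, le_of_lt hε0]
      simpa using this
    rw [hdot]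
    constructor
    · intro hfx
      have hxS : x ∈ S := by simp [hSdef, hfx]
      have hmle : m ≤ dotProd w x - θ := Finset.inf'_le _ hxS
      linarith
    · intro hlt
      exact (hr x).mpr (by linarith)
  · push_neg at hS
    refine ⟨fun _ => 1, n, ?_, fun i => one_pos⟩
    intro x
    have hle : dotProd (fun _ => (1:ℚ)) x ≤ n := by
      unfold dotProd
      refine le_trans (Finset.sum_le_sum (g := fun _ => (1:ℚ)) fun i _ => ?_) (by simp)
      cases hxi : x i <;> simp [hxi]
    simp only [hS x, Bool.false_eq_true, false_iff, not_lt]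
    exact hle

lemma semi_iff (f : (Fin n → Bool) → Bool) :
    SemiGoldilocks f ↔ IsLTF f ∧ Mono f ∧ ∀ i, f (unitB i) = false := by
  constructor
  · rintro ⟨hltf, ⟨w, θ, hr, hpos⟩, ⟨v, φ, hs, hsmall⟩⟩
    refine ⟨hltf, ?_, ?_⟩
    · intro x y hxy
      apply bool_le_of_imp
      intro hfx
      apply (hr y).mpr
      refine lt_of_lt_of_le ((hr x).mp hfx) ?_
      unfold dotProd
      refine Finset.sum_le_sum fun i _ => ?_
      cases hxi : x i
      · cases hyi : y i <;> simp [le_of_lt (hpos i)]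
      · have : y i = true := eq_true_of_le (hxy i) hxi
        simp [this]
    · intro i
      by_contra h
      have : f (unitB i) = true := by
        cases hfi : f (unitB i)
        · exact absurd hfi h
        · rfl
      have := (hs _).mp this
      rw [dot_unit] at this
      exact absurd this (not_lt.mpr (hsmall i))
  · rintro ⟨hltf, hmono, hunit⟩
    obtain ⟨w, θ, hr⟩ := hltf
    refine ⟨⟨w, θ, hr⟩, ?_, ⟨w, θ, hr, ?_⟩⟩
    · obtain ⟨w1, hr1, hw1⟩ := real_nonneg hmono hr
      obtain ⟨w2, θ2, hr2, hw2⟩ := real_pos hr1 hw1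
      exact ⟨w2, θ2, hr2, hw2⟩
    · intro i
      have := hunit i
      have h2 : ¬ (θ < dotProd w (unitB i)) := by
        intro hlt
        rw [(hr _).mpr hlt] at this
        exact absurd this (by decide)
      rw [dot_unit] at h2
      exact not_lt.mp h2

def GoodA (f : (Fin n → Bool) → Bool) : Prop :=
  IsLTF f ∧ Mono f ∧ ∀ i, f (unitB i) = false

def GoodB (f : (Fin n → Bool) → Bool) : Prop :=
  IsLTF f ∧ Mono f ∧ ∀ i, DependsOnCoord f i

open Classical in
noncomputable def phi (f : (Fin n → Bool) → Bool) : (Fin n → Bool) → Bool :=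
  fun x => f x || (if ∃ i, ¬ DependsOnCoord f i ∧ x i = true then true else false)

open Classical in
noncomputable def psi (g : (Fin n → Bool) → Bool) : (Fin n → Bool) → Bool :=
  fun x => g (maskOff (fun i => g (unitB i) = true) x)

lemma update_le_update (x : Fin n → Bool) (i : Fin n) :
    ∀ j, Function.update x i false j ≤ Function.update x i true j := by
  intro j
  rcases eq_or_ne j i with h | h
  · subst h; simp
  · simp [Function.update_apply, h]

lemma dep_witness {g : (Fin n → Bool) → Bool} (hmono : Mono g) {i : Fin n}
    (h : DependsOnCoord g i) :
    ∃ x, g (Function.update x i true) = true ∧ g (Function.update x i false) = false := by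
  obtain ⟨x, hx⟩ := h
  have hle : g (Function.update x i false) ≤ g (Function.update x i true) :=
    hmono _ _ (update_le_update x i)
  cases h1 : g (Function.update x i true) <;> cases h2 : g (Function.update x i false) <;>
    rw [h1, h2] at hx hle
  · exact absurd rfl hx
  · exact absurd hle (by decide)
  · exact ⟨x, h1, h2⟩
  · exact absurd rfl hx

lemma real_zero {f : (Fin n → Bool) → Bool} {w : Fin n → ℚ} {θ : ℚ} {P : Fin n → Prop}
    (hr : IsRealization f w θ) (hind : ∀ i, P i → ¬ DependsOnCoord f i) :
    ∃ w', (∀ j, P j → w' j = 0) ∧ (∀ j, ¬ P j → w' j = w j) ∧ IsRealization f w' θ := by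
  classical
  refine ⟨fun j => if P j then 0 else w j, fun j hj => by simp [hj], fun j hj => by simp [hj], ?_⟩
  intro x
  have hd : dotProd w (maskOff P x) = dotProd (fun j => if P j then 0 else w j) x := by
    unfold dotProd
    refine Finset.sum_congr rfl fun j _ => ?_
    by_cases hj : P j
    · simp [maskOff, hj]
    · simp [maskOff, hj]
  rw [← f_maskOff hind x, hr (maskOff P x), hd]

lemma phi_ltf {f : (Fin n → Bool) → Bool} (hf : GoodA f) : IsLTF (phi f) := by
  classical
  obtain ⟨⟨w, θ, hr⟩, hmono, hunit⟩ := hf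
  obtain ⟨w0, hw0z, hw0w, hr0⟩ :=
    real_zero (P := fun i => ¬ DependsOnCoord f i) hr (fun i hi => hi)
  have hne : (Finset.univ : Finset (Fin n → Bool)).Nonempty := ⟨fun _ => false, Finset.mem_univ _⟩
  set B : ℚ := (Finset.univ : Finset (Fin n → Bool)).inf' hne (fun y => dotProd w0 y) with hB
  set M : ℚ := max (θ + 1 - B) 1 with hM
  have hM1 : (1:ℚ) ≤ M := le_max_right _ _
  have hMθ : θ + 1 - B ≤ M := le_max_left _ _
  refine ⟨fun j => if ¬ DependsOnCoord f j then M else w0 j, θ, ?_⟩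
  intro x
  by_cases hex : ∃ j, ¬ DependsOnCoord f j ∧ x j = true
  · have hphix : phi f x = true := by simp [phi, hex]
    rw [hphix]
    simp only [true_iff]
    obtain ⟨j0, hj0, hxj0⟩ := hex
    set y : Fin n → Bool := maskOff (fun i => ¬ DependsOnCoord f i) x with hy
    have hsplit : dotProd (fun j => if ¬ DependsOnCoord f j then M else w0 j) x
        = dotProd w0 y + ∑ j, (if ¬ DependsOnCoord f j ∧ x j = true then M else 0) := by
      unfold dotProd
      rw [← Finset.sum_add_distrib]
      refine Finset.sum_congr rfl fun j _ => ?_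
      by_cases hj : DependsOnCoord f j
      · have : y j = x j := by simp [hy, maskOff, hj]
        cases hxj : x j <;> simp [hj, this, hxj]
      · have : y j = false := by simp [hy, maskOff, hj]
        cases hxj : x j <;> simp [hj, this, hxj, hw0z j hj]
    have hBy : B ≤ dotProd w0 y := Finset.inf'_le _ (Finset.mem_univ _)
    have hMs : M ≤ ∑ j, (if ¬ DependsOnCoord f j ∧ x j = true then M else 0) := by
      have := Finset.single_le_sum
        (f := fun j => if ¬ DependsOnCoord f j ∧ x j = true then M else (0:ℚ))
        (fun j _ => by by_cases hj : ¬ DependsOnCoord f j ∧ x j = true <;> simp [hj] <;> linarith)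
        (Finset.mem_univ j0)
      simpa [hj0, hxj0] using this
    rw [hsplit]
    linarith
  · have hphix : phi f x = f x := by simp [phi, hex]
    rw [hphix]
    push_neg at hex
    have hd : dotProd (fun j => if ¬ DependsOnCoord f j then M else w0 j) x = dotProd w0 x := by
      unfold dotProd
      refine Finset.sum_congr rfl fun j _ => ?_
      by_cases hj : DependsOnCoord f j
      · simp [hj]
      · have : x j = false := by
          cases hxj : x j
          · rfl
          · exact absurd hxj (hex j hj)
        simp [this]
    rw [hd]
    exact hr0 x

lemma phi_mono {f : (Fin n → Bool) → Bool} (hf : GoodA f) : Mono (phi f) := by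
  classical
  obtain ⟨_, hmono, _⟩ := hf
  intro x y hxy
  apply bool_le_of_imp
  intro h
  by_cases hex : ∃ i, ¬ DependsOnCoord f i ∧ x i = true
  · obtain ⟨i, hi, hxi⟩ := hex
    have hyi : y i = true := eq_true_of_le (hxy i) hxi
    simp [phi, show ∃ i, ¬ DependsOnCoord f i ∧ y i = true from ⟨i, hi, hyi⟩]
  · have hphix : phi f x = f x := by simp [phi, hex]
    rw [hphix] at h
    have hfy : f y = true := eq_true_of_le (hmono x y hxy) h
    simp [phi, hfy]

lemma phi_nondeg {f : (Fin n → Bool) → Bool} (hf : GoodA f) : ∀ i, DependsOnCoord (phi f) i := by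
  classical
  obtain ⟨_, hmono, hunit⟩ := hf
  intro i
  by_cases hdep : DependsOnCoord f i
  · obtain ⟨x, ht, h0⟩ := dep_witness hmono hdep
    set y : Fin n → Bool := maskOff (fun j => ¬ DependsOnCoord f j) x with hy
    have hmaskupd : ∀ b, maskOff (fun j => ¬ DependsOnCoord f j) (Function.update x i b)
        = Function.update y i b := by
      intro b
      funext j
      rcases eq_or_ne j i with hj | hj
      · subst hj; simp [maskOff, hdep, hy]
      · simp [maskOff, hy, Function.update_apply, hj]
    have hfy : ∀ b, f (Function.update y i b) = f (Function.update x i b) := by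
      intro b
      rw [← hmaskupd b]
      exact f_maskOff (fun j hj => hj) _
    have hyfalse : ∀ b j, ¬ DependsOnCoord f j → Function.update y i b j = false := by
      intro b j hj
      have hji : j ≠ i := fun hc => hj (by rw [hc]; exact hdep)
      rw [Function.update_apply, if_neg hji]
      simp [hy, maskOff, hj]
    have hgy : ∀ b, phi f (Function.update y i b) = f (Function.update y i b) := by
      intro b
      have : ¬ ∃ j, ¬ DependsOnCoord f j ∧ Function.update y i b j = true := by
        rintro ⟨j, hj, hjt⟩
        rw [hyfalse b j hj] at hjt
        exact absurd hjt (by decide)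
      simp [phi, this]
    refine ⟨y, ?_⟩
    rw [hgy true, hgy false, hfy true, hfy false, ht, h0]
    decide
  · refine ⟨fun _ => false, ?_⟩
    have h1 : Function.update (fun _ => false) i true = unitB i := by
      funext j; simp [Function.update_apply, unitB]
    have h2 : Function.update (fun _ => false) i false = (fun _ : Fin n => false) := by
      funext j; simp [Function.update_apply]
    rw [h1, h2]
    have hg1 : phi f (unitB i) = true := by
      simp [phi, show ∃ j, ¬ DependsOnCoord f j ∧ unitB i j = true from ⟨i, hdep, by simp [unitB]⟩]
    have hf0 : f (fun _ : Fin n => false) = false := by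
      have hle := hmono (fun _ => false) (unitB i) (fun j => Bool.false_le _)
      rw [hunit i] at hle
      cases hc : f (fun _ : Fin n => false)
      · rfl
      · rw [hc] at hle; exact absurd hle (by decide)
    have hg0 : phi f (fun _ : Fin n => false) = false := by
      have : ¬ ∃ j, ¬ DependsOnCoord f j ∧ (fun _ : Fin n => false) j = true := by
        rintro ⟨j, _, hj⟩
        simp at hj
      simp [phi, this, hf0]
    rw [hg1, hg0]
    decide

lemma phi_mem {f : (Fin n → Bool) → Bool} (hf : GoodA f) : GoodB (phi f) :=
  ⟨phi_ltf hf, phi_mono hf, phi_nondeg hf⟩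

lemma psi_ltf {g : (Fin n → Bool) → Bool} (hg : GoodB g) : IsLTF (psi g) := by
  classical
  obtain ⟨⟨w, θ, hr⟩, hmono, hdep⟩ := hg
  refine ⟨fun j => if g (unitB j) = true then 0 else w j, θ, ?_⟩
  intro x
  have hd : dotProd w (maskOff (fun i => g (unitB i) = true) x)
      = dotProd (fun j => if g (unitB j) = true then 0 else w j) x := by
    unfold dotProd
    refine Finset.sum_congr rfl fun j _ => ?_
    by_cases hj : g (unitB j) = true
    · simp [maskOff, hj]
    · simp [maskOff, hj]
  rw [← hd]
  exact hr _

lemma psi_mono {g : (Fin n → Bool) → Bool} (hg : GoodB g) : Mono (psi g) := by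
  classical
  obtain ⟨_, hmono, _⟩ := hg
  intro x y hxy
  apply hmono
  intro j
  by_cases hj : g (unitB j) = true
  · simp [maskOff, hj]
  · simpa [maskOff, hj] using hxy j

lemma g_zero_false {g : (Fin n → Bool) → Bool} (hmono : Mono g) (i : Fin n)
    (hdep : DependsOnCoord g i) : g (fun _ => false) = false := by
  cases h0 : g (fun _ => false)
  · rfl
  · exfalso
    obtain ⟨x, hx⟩ := hdep
    have hall : ∀ z : Fin n → Bool, g z = true := fun z =>
      eq_true_of_le (hmono (fun _ => false) z (fun j => Bool.false_le _)) h0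
    rw [hall _, hall _] at hx
    exact hx rfl

lemma psi_units {g : (Fin n → Bool) → Bool} (hg : GoodB g) :
    ∀ i, psi g (unitB i) = false := by
  classical
  obtain ⟨_, hmono, hdep⟩ := hg
  intro i
  by_cases hiE : g (unitB i) = true
  · have hmask : maskOff (fun j => g (unitB j) = true) (unitB i) = (fun _ : Fin n => false) := by
      funext j
      by_cases hj : g (unitB j) = true
      · simp [maskOff, hj]
      · have hji : j ≠ i := fun hc => hj (hc ▸ hiE)
        simp [maskOff, hj, unitB, hji]
    show g _ = false
    rw [hmask]
    exact g_zero_false hmono i (hdep i)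
  · have hmask : maskOff (fun j => g (unitB j) = true) (unitB i) = unitB i := by
      funext j
      by_cases hj : g (unitB j) = true
      · have hji : j ≠ i := fun hc => hiE (hc ▸ hj)
        simp [maskOff, hj, unitB, hji]
      · simp [maskOff, hj]
    show g _ = false
    rw [hmask]
    exact eq_false_of_ne_true hiE

lemma psi_mem {g : (Fin n → Bool) → Bool} (hg : GoodB g) : GoodA (psi g) :=
  ⟨psi_ltf hg, psi_mono hg, psi_units hg⟩

lemma phi_unit {f : (Fin n → Bool) → Bool} (hf : GoodA f) (i : Fin n) :
    phi f (unitB i) = true ↔ ¬ DependsOnCoord f i := by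
  classical
  obtain ⟨_, _, hunit⟩ := hf
  have hex : (∃ j, ¬ DependsOnCoord f j ∧ unitB i j = true) ↔ ¬ DependsOnCoord f i := by
    constructor
    · rintro ⟨j, hj, hji⟩
      have : j = i := by
        by_contra hc
        simp [unitB, hc] at hji
      exact this ▸ hj
    · intro h
      exact ⟨i, h, by simp [unitB]⟩
  by_cases h : ¬ DependsOnCoord f i
  · simp [phi, hex.mpr h, h]
  · have : ¬ ∃ j, ¬ DependsOnCoord f j ∧ unitB i j = true := fun hc => h (hex.mp hc)
    simp [phi, this, hunit i, h]

lemma psi_phi {f : (Fin n → Bool) → Bool} (hf : GoodA f) : psi (phi f) = f := by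
  classical
  funext x
  have hmask : maskOff (fun i => phi f (unitB i) = true) x
      = maskOff (fun i => ¬ DependsOnCoord f i) x := by
    funext j
    by_cases hj : ¬ DependsOnCoord f j
    · simp [maskOff, (phi_unit hf j).mpr hj, hj]
    · have h1 : ¬ (phi f (unitB j) = true) := fun hc => hj ((phi_unit hf j).mp hc)
      simp [maskOff, h1, hj]
  show phi f (maskOff (fun i => phi f (unitB i) = true) x) = f x
  rw [hmask]
  have hnoex : ¬ ∃ j, ¬ DependsOnCoord f j ∧ maskOff (fun i => ¬ DependsOnCoord f i) x j = true := by
    rintro ⟨j, hj, hjt⟩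
    simp [maskOff, hj] at hjt
  have : phi f (maskOff (fun i => ¬ DependsOnCoord f i) x)
      = f (maskOff (fun i => ¬ DependsOnCoord f i) x) := by simp [phi, hnoex]
  rw [this]
  exact f_maskOff (fun j hj => hj) x

lemma phi_psi {g : (Fin n → Bool) → Bool} (hg : GoodB g) : phi (psi g) = g := by
  classical
  obtain ⟨hltf, hmono, hdep⟩ := hg
  have hstep : ∀ i, ¬ DependsOnCoord (psi g) i ↔ g (unitB i) = true := by
    intro i
    constructor
    · intro hnd
      by_contra hiE
      -- g(unit i) ≠ true, show psi g depends on i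
      apply hnd
      obtain ⟨x, ht, h0⟩ := dep_witness hmono (hdep i)
      have hxE : ∀ j, g (unitB j) = true → x j = false := by
        intro j hj
        by_contra hxj
        have hxj' : x j = true := by
          cases hc : x j
          · exact absurd hc hxj
          · rfl
        have hji : j ≠ i := fun hc => hiE (hc ▸ hj)
        have hle : ∀ k, unitB j k ≤ Function.update x i false k := by
          intro k
          rcases eq_or_ne k j with hk | hk
          · subst hk
            have hki : k ≠ i := hji
            simp [unitB, Function.update_apply, hki, hxj']
          · simp [unitB, hk]
        have := eq_true_of_le (hmono _ _ hle) hj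
        rw [this] at h0
        exact absurd h0 (by decide)
      have hmaskupd : ∀ b, maskOff (fun j => g (unitB j) = true) (Function.update x i b)
          = Function.update x i b := by
        intro b
        funext j
        by_cases hj : g (unitB j) = true
        · have hji : j ≠ i := fun hc => hiE (hc ▸ hj)
          simp [maskOff, hj, Function.update_apply, hji, hxE j hj]
        · simp [maskOff, hj]
      refine ⟨x, ?_⟩
      show g _ ≠ g _
      rw [hmaskupd true, hmaskupd false, ht, h0]
      decide
    · intro hiE
      intro hdep'
      obtain ⟨x, hx⟩ := hdep'
      apply hx
      show g _ = g _
      congr 1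
      funext j
      by_cases hj : g (unitB j) = true
      · simp [maskOff, hj]
      · have hji : j ≠ i := fun hc => hj (hc ▸ hiE)
        simp [maskOff, hj, Function.update_apply, hji]
  funext x
  by_cases hex : ∃ i, g (unitB i) = true ∧ x i = true
  · obtain ⟨i, hiE, hxi⟩ := hex
    have hgx : g x = true := by
      refine eq_true_of_le (hmono (unitB i) x ?_) hiE
      intro k
      rcases eq_or_ne k i with hk | hk
      · subst hk; simp [unitB, hxi]
      · simp [unitB, hk]
    have hphis : ∃ j, ¬ DependsOnCoord (psi g) j ∧ x j = true :=
      ⟨i, (hstep i).mpr hiE, hxi⟩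
    simp [phi, hphis, hgx]
  · push_neg at hex
    have hxE : ∀ j, g (unitB j) = true → x j = false := by
      intro j hj
      cases hc : x j
      · rfl
      · exact absurd hc (hex j hj)
    have hmask : maskOff (fun j => g (unitB j) = true) x = x := by
      funext j
      by_cases hj : g (unitB j) = true
      · simp [maskOff, hj, hxE j hj]
      · simp [maskOff, hj]
    have hnoex : ¬ ∃ j, ¬ DependsOnCoord (psi g) j ∧ x j = true := by
      rintro ⟨j, hj, hjt⟩
      have := (hstep j).mp hj
      rw [hxE j this] at hjt
      exact absurd hjt (by decide)
    have hpsix : psi g x = g x := by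
      show g _ = g x
      rw [hmask]
    simp [phi, hnoex, hpsix]

end Stmt18

/-- The number of Semi-Goldilocks LTFs on `n` variables equals the number of positive
nondegenerate LTFs on `n` variables. -/
theorem stmt_18 (n : ℕ) :
    Set.ncard {f : (Fin n → Bool) → Bool | SemiGoldilocks f} =
      Set.ncard {f : (Fin n → Bool) → Bool |
        IsLTF f ∧ (∀ x y : Fin n → Bool, (∀ i, x i ≤ y i) → f x ≤ f y) ∧
        ∀ i, DependsOnCoord f i} := by
  classical
  have hset : {f : (Fin n → Bool) → Bool | SemiGoldilocks f}
      = {f : (Fin n → Bool) → Bool | Stmt18.GoodA f} :=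
    Set.ext fun f => Stmt18.semi_iff f
  have hsetB : {f : (Fin n → Bool) → Bool |
        IsLTF f ∧ (∀ x y : Fin n → Bool, (∀ i, x i ≤ y i) → f x ≤ f y) ∧
        ∀ i, DependsOnCoord f i} = {f : (Fin n → Bool) → Bool | Stmt18.GoodB f} := rfl
  rw [hset, hsetB]
  have hbij : Set.BijOn (Stmt18.phi (n := n))
      {f : (Fin n → Bool) → Bool | Stmt18.GoodA f}
      {f : (Fin n → Bool) → Bool | Stmt18.GoodB f} := by
    refine ⟨fun f hf => Stmt18.phi_mem hf, ?_, ?_⟩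
    · intro f1 h1 f2 h2 heq
      have := congrArg Stmt18.psi heq
      rwa [Stmt18.psi_phi h1, Stmt18.psi_phi h2] at this
    · intro g hg
      exact ⟨Stmt18.psi g, Stmt18.psi_mem hg, Stmt18.phi_psi hg⟩
  calc ({f : (Fin n → Bool) → Bool | Stmt18.GoodA f}).ncard
      = (Stmt18.phi '' {f : (Fin n → Bool) → Bool | Stmt18.GoodA f}).ncard :=
        (Set.ncard_image_of_injOn hbij.injOn).symm
    _ = ({f : (Fin n → Bool) → Bool | Stmt18.GoodB f}).ncard := by rw [hbij.image_eq]
end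

section
/- For all n ≥ 0, the number LTF(n) of linear threshold functions on n variables satisfies LTF(n) = Σ_{k=0}^{n} binom(n, k) · 2^k · SGold(k), where SGold(k) denotes the number of Semi-Goldilocks linear threshold functions on k variables. -/
/-- The number of LTFs on `n` variables. -/
noncomputable def LTFcount (n : ℕ) : ℕ := Set.ncard {f : (Fin n → Bool) → Bool | IsLTF f}

/-- The number of Semi-Goldilocks LTFs on `n` variables. -/
noncomputable def SGoldCount (n : ℕ) : ℕ := Set.ncard {f : (Fin n → Bool) → Bool | SemiGoldilocks f}

namespace SGA

abbrev BF (ι : Type*) := (ι → Bool) → Bool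

variable {ι κ : Type*} [Fintype ι] [DecidableEq ι] [Fintype κ] [DecidableEq κ]

def dotp (w : ι → ℚ) (x : ι → Bool) : ℚ := ∑ i, if x i then w i else 0

def Rzn (f : BF ι) (w : ι → ℚ) (θ : ℚ) : Prop := ∀ x, f x = true ↔ θ < dotp w x

def LTFb (b : Bool) (f : BF ι) : Prop := ∃ w θ, Rzn f w θ ∧ (b = true → ∀ i, 0 ≤ w i)

def Dep (f : BF ι) (i : ι) : Prop :=
  ∃ x, f (Function.update x i true) ≠ f (Function.update x i false)

def unit (i : ι) : ι → Bool := fun j => decide (j = i)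

def SGw (f : BF ι) : Prop := LTFb true f ∧ ∀ i, f (unit i) = false

lemma dotp_mono {w : ι → ℚ} (hw : ∀ i, 0 ≤ w i) {x y : ι → Bool}
    (hxy : ∀ i, x i = true → y i = true) : dotp w x ≤ dotp w y := by
  refine Finset.sum_le_sum fun i _ => ?_
  by_cases hx : x i
  · simp [hx, hxy i hx]
  · by_cases hy : y i <;> simp [hx, hy, hw i]

lemma dotp_le {w u : ι → ℚ} (h : ∀ i, w i ≤ u i) (x : ι → Bool) : dotp w x ≤ dotp u x := by
  refine Finset.sum_le_sum fun i _ => ?_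
  by_cases hx : x i <;> simp [hx, h i]

lemma dotp_sub_le {w u : ι → ℚ} (h : ∀ i, w i ≤ u i) (x : ι → Bool) :
    dotp u x ≤ dotp w x + ∑ i, (u i - w i) := by
  rw [dotp, dotp, ← Finset.sum_add_distrib]
  refine Finset.sum_le_sum fun i _ => ?_
  have := h i
  by_cases hx : x i <;> simp [hx] <;> linarith

lemma dotp_unit (w : ι → ℚ) (i : ι) : dotp w (unit i) = w i := by
  simp [dotp, unit, Finset.sum_ite_eq']

lemma exists_slack {f : BF ι} {w θ} (h : Rzn f w θ) :
    ∃ δ : ℚ, 0 < δ ∧ ∀ x, f x = true → θ + δ ≤ dotp w x := by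
  classical
  by_cases hne : ∃ x, f x = true
  · obtain ⟨x0, hx0⟩ := hne
    obtain ⟨b, hb, hmin⟩ := Finset.exists_min_image
      (Finset.univ.filter fun x => f x = true) (fun x => dotp w x) ⟨x0, by simp [hx0]⟩
    have hbt : f b = true := (Finset.mem_filter.1 hb).2
    have hbd : θ < dotp w b := (h b).1 hbt
    refine ⟨(dotp w b - θ) / 2, by linarith, fun x hx => ?_⟩
    have := hmin x (by simp [hx])
    linarith
  · exact ⟨1, one_pos, fun x hx => absurd ⟨x, hx⟩ hne⟩

/-- From any realization we can get one with strictly larger weights. -/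
lemma bump {f : BF ι} {w θ} (h : Rzn f w θ) :
    ∃ u θ', Rzn f u θ' ∧ ∀ i, w i < u i := by
  obtain ⟨δ, hδ, hs⟩ := exists_slack h
  set c : ℚ := (Fintype.card ι : ℚ)
  have hc : 0 ≤ c := by positivity
  set η : ℚ := δ / (c + 1) with hη
  have hηpos : 0 < η := by positivity
  refine ⟨fun i => w i + η, θ + c * η, fun x => ?_, fun i => by simpa using hηpos⟩
  have hle : dotp w x ≤ dotp (fun i => w i + η) x := dotp_le (fun i => by simpa using hηpos.le) x
  have hge : dotp (fun i => w i + η) x ≤ dotp w x + c * η := by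
    have := dotp_sub_le (w := w) (u := fun i => w i + η) (fun i => by simpa using hηpos.le) x
    simpa [Finset.sum_const, Finset.card_univ, mul_comm] using this
  have hδη : (c + 1) * η = δ := by
    have hc1 : c + 1 ≠ 0 := by positivity
    rw [hη]; field_simp
  constructor
  · intro hx
    have h1 := hs x hx
    nlinarith
  · intro hx
    by_contra hfx
    have hwx : ¬ (θ < dotp w x) := fun hlt => hfx ((h x).2 hlt)
    push_neg at hwx
    linarith

/-! ### Reindexing -/

def mapF (e : ι ≃ κ) (f : BF ι) : BF κ := fun y => f (fun i => y (e i))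

lemma mapF_mapF (e : ι ≃ κ) (f : BF ι) : mapF e.symm (mapF e f) = f := by
  funext x; simp [mapF]

def mapFE (e : ι ≃ κ) : BF ι ≃ BF κ :=
  ⟨mapF e, mapF e.symm, fun f => mapF_mapF e f, fun f => by
    simpa using mapF_mapF e.symm f⟩

lemma dotp_mapF (e : ι ≃ κ) (w : ι → ℚ) (y : κ → Bool) :
    dotp (w ∘ e.symm) y = dotp w (fun i => y (e i)) := by
  refine Fintype.sum_equiv e (fun i => if y (e i) then w i else 0)
    (fun j => if y j then (w ∘ e.symm) j else 0) (fun i => by simp) |>.symm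

lemma Rzn_mapF (e : ι ≃ κ) {f : BF ι} {w θ} (h : Rzn f w θ) :
    Rzn (mapF e f) (w ∘ e.symm) θ := by
  intro y
  rw [mapF, h, dotp_mapF]

lemma LTFb_mapF (e : ι ≃ κ) {b} {f : BF ι} (h : LTFb b f) : LTFb b (mapF e f) := by
  obtain ⟨w, θ, hr, hw⟩ := h
  exact ⟨w ∘ e.symm, θ, Rzn_mapF e hr, fun hb i => hw hb _⟩

lemma update_comp_eq (e : ι ≃ κ) (x : κ → Bool) (i : ι) (b : Bool) :
    (fun i' => Function.update x (e i) b (e i')) = Function.update (fun i' => x (e i')) i b := by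
  funext j
  rcases eq_or_ne j i with rfl | hji
  · simp
  · simp [Function.update, hji, e.injective.ne hji]

lemma Dep_mapF (e : ι ≃ κ) {f : BF ι} {i : ι} (h : Dep f i) : Dep (mapF e f) (e i) := by
  obtain ⟨x, hx⟩ := h
  refine ⟨fun j => x (e.symm j), ?_⟩
  rw [mapF, mapF, update_comp_eq, update_comp_eq]
  simpa using hx

lemma unit_comp (e : ι ≃ κ) (i : ι) : (fun j => unit (e i) (e j)) = unit i := by
  funext j; simp [unit, e.injective.eq_iff]

lemma SGw_mapF (e : ι ≃ κ) {f : BF ι} (h : SGw f) : SGw (mapF e f) := by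
  refine ⟨LTFb_mapF e h.1, fun j => ?_⟩
  have := h.2 (e.symm j)
  rw [mapF]
  have h2 : (fun i => unit j (e i)) = unit (e.symm j) := by
    have := unit_comp e (e.symm j); simpa using this
  rw [h2]; exact this

lemma card_mapF (e : ι ≃ κ) (P : BF ι → Prop) (Q : BF κ → Prop)
    (h : ∀ f, P f ↔ Q (mapF e f)) :
    Nat.card {f : BF ι // P f} = Nat.card {g : BF κ // Q g} :=
  Nat.card_congr (Equiv.subtypeEquiv (mapFE e) h)

/-! ### Flips -/

def flip (ε : ι → Bool) (x : ι → Bool) : ι → Bool := fun i => xor (x i) (ε i)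

lemma flip_flip (ε x : ι → Bool) : flip ε (flip ε x) = x := by
  funext i; cases h1 : x i <;> cases h2 : ε i <;> simp [flip, h1, h2]

lemma dotp_flip (w : ι → ℚ) (ε x : ι → Bool) :
    dotp w (flip ε x) =
      (∑ i, if ε i then w i else 0) + dotp (fun i => if ε i then -w i else w i) x := by
  rw [dotp, dotp, ← Finset.sum_add_distrib]
  refine Finset.sum_congr rfl fun i _ => ?_
  cases h1 : x i <;> cases h2 : ε i <;> simp [flip, h1, h2]

lemma Rzn_flip {f : BF ι} {w θ} (ε : ι → Bool) (h : Rzn f w θ) :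
    Rzn (fun x => f (flip ε x)) (fun i => if ε i then -w i else w i)
      (θ - ∑ i, if ε i then w i else 0) := by
  intro x
  rw [h, dotp_flip]
  constructor <;> intro <;> linarith

lemma flip_update (ε x : ι → Bool) (i : ι) (b : Bool) :
    flip ε (Function.update x i b) = Function.update (flip ε x) i (xor b (ε i)) := by
  funext j
  rcases eq_or_ne j i with rfl | hji
  · simp [flip]
  · simp [flip, Function.update, hji]

lemma Dep_flip {f : BF ι} (ε : ι → Bool) {i : ι} (h : Dep f i) :
    Dep (fun x => f (flip ε x)) i := by
  obtain ⟨x, hx⟩ := h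
  refine ⟨flip ε x, ?_⟩
  show f (flip ε (Function.update (flip ε x) i true)) ≠ f (flip ε (Function.update (flip ε x) i false))
  rw [flip_update, flip_update, flip_flip]
  cases h2 : ε i
  · simpa using hx
  · simpa using hx.symm

/-! ### Independence -/

lemma not_dep_update {f : BF ι} {i : ι} (h : ¬ Dep f i) (x : ι → Bool) (b : Bool) :
    f (Function.update x i b) = f x := by
  simp only [Dep, ne_eq, not_exists, not_not] at h
  have h2 := h x
  have key : ∀ c, f (Function.update x i c) = f (Function.update x i (x i)) := by
    intro c
    cases c <;> cases hb : x i <;> first | rfl | exact h2.symm | exact h2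
  rw [key b, Function.update_eq_self]

lemma indep_agree {f : BF ι} (D : Finset ι) (hD : ∀ i ∈ D, ¬ Dep f i) :
    ∀ x y, (∀ i, i ∉ D → x i = y i) → f x = f y := by
  classical
  induction D using Finset.induction_on with
  | empty =>
    intro x y h
    have : x = y := funext fun i => h i (by simp)
    rw [this]
  | insert i D' hi ih =>
    intro x y h
    have h1 : f x = f (Function.update x i (y i)) :=
      (not_dep_update (hD i (Finset.mem_insert_self i D')) x (y i)).symm
    rw [h1]
    refine ih (fun j hj => hD j (Finset.mem_insert_of_mem hj)) _ _ fun j hj => ?_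
    rcases eq_or_ne j i with rfl | hji
    · simp
    · simp only [Function.update, dif_neg hji]
      exact h j (by simp [hji, hj])

/-! ### Restriction / extension along a subset -/

variable {S : Finset ι}

def extS (S : Finset ι) (y : {i // i ∈ S} → Bool) : ι → Bool :=
  fun i => if h : i ∈ S then y ⟨i, h⟩ else false

def resS (S : Finset ι) (x : ι → Bool) : {i // i ∈ S} → Bool := fun j => x j.1

lemma resS_extS (y : {i // i ∈ S} → Bool) : resS S (extS S y) = y := by
  funext j; simp [resS, extS, j.2]

lemma dotp_extS (w : ι → ℚ) (y : {i // i ∈ S} → Bool) :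
    dotp (fun j : {i // i ∈ S} => w j.1) y = dotp w (extS S y) := by
  classical
  rw [dotp]
  have h2 : ∀ j : {i // i ∈ S}, (if y j then w j.1 else 0) = (if extS S y j.1 then w j.1 else 0) :=
    fun j => by simp [extS, j.2]
  rw [Finset.sum_congr rfl fun j _ => h2 j,
    Finset.sum_coe_sort S (fun i => if extS S y i then w i else 0), dotp]
  exact Finset.sum_subset (Finset.subset_univ S) fun i _ hi => by simp [extS, hi]

lemma dotp_wext (w : {i // i ∈ S} → ℚ) (x : ι → Bool) :
    dotp (fun i => if hi : i ∈ S then w ⟨i, hi⟩ else 0) x = dotp w (resS S x) := by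
  classical
  have h1 : ∑ i : ι, (if x i then (if hi : i ∈ S then w ⟨i, hi⟩ else 0) else 0)
      = ∑ i ∈ S, (if x i then (if hi : i ∈ S then w ⟨i, hi⟩ else 0) else 0) :=
    (Finset.sum_subset (Finset.subset_univ S) fun i _ hi => by simp [hi]).symm
  rw [dotp, dotp, h1, ← Finset.sum_coe_sort S]
  exact Finset.sum_congr rfl fun j _ => by simp [resS, j.2]; congr

lemma dotp_falseOff (w : ι → ℚ) (x : ι → Bool) (hx : ∀ i ∉ S, x i = false) :
    dotp w x = dotp (fun j : {i // i ∈ S} => w j.1) (resS S x) := by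
  classical
  have h1 : ∑ i : ι, (if x i then w i else 0) = ∑ i ∈ S, (if x i then w i else 0) :=
    (Finset.sum_subset (Finset.subset_univ S) fun i _ hi => by simp [hx i hi]).symm
  rw [dotp, dotp, h1, ← Finset.sum_coe_sort S]
  exact Finset.sum_congr rfl fun j _ => rfl

lemma LTFb_res {b : Bool} {f : BF ι} (h : LTFb b f) (S : Finset ι) :
    LTFb b (fun y => f (extS S y)) := by
  obtain ⟨w, θ, hr, hw⟩ := h
  refine ⟨fun j => w j.1, θ, fun y => ?_, fun hb j => hw hb j.1⟩
  rw [dotp_extS]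
  exact hr (extS S y)

lemma LTFb_ext {b : Bool} {h : BF {i // i ∈ S}} (hh : LTFb b h) :
    LTFb b (fun x => h (resS S x)) := by
  obtain ⟨w, θ, hr, hw⟩ := hh
  refine ⟨fun i => if hi : i ∈ S then w ⟨i, hi⟩ else 0, θ, fun x => ?_, fun hb i => ?_⟩
  · rw [dotp_wext]
    exact hr (resS S x)
  · by_cases hi : i ∈ S <;> simp [hi, hw hb]

lemma extS_update (y : {i // i ∈ S} → Bool) {i : ι} (hi : i ∈ S) (b : Bool) :
    extS S (Function.update y ⟨i, hi⟩ b) = Function.update (extS S y) i b := by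
  funext j
  rcases eq_or_ne j i with rfl | hji
  · simp [extS, hi]
  · have hne : ∀ hj : j ∈ S, (⟨j, hj⟩ : {i // i ∈ S}) ≠ ⟨i, hi⟩ :=
      fun hj h => hji (congrArg Subtype.val h)
    by_cases hj : j ∈ S
    · simp [extS, Function.update, hj, hji, hne hj]
    · simp [extS, Function.update, hj, hji]

lemma resS_update_mem (x : ι → Bool) {i : ι} (hi : i ∈ S) (b : Bool) :
    resS S (Function.update x i b) = Function.update (resS S x) ⟨i, hi⟩ b := by
  funext j
  rcases eq_or_ne j ⟨i, hi⟩ with rfl | hj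
  · simp [resS]
  · have hne : (j : ι) ≠ i := fun h => hj (Subtype.ext h)
    simp [resS, Function.update, hne, hj]

lemma resS_update_not_mem (x : ι → Bool) {i : ι} (hi : i ∉ S) (b : Bool) :
    resS S (Function.update x i b) = resS S x := by
  funext j
  have hne : (j : ι) ≠ i := fun h => hi (h ▸ j.2)
  simp [resS, Function.update, hne]

lemma ext_res_eq {f : BF ι} (hind : ∀ i, i ∉ S → ¬ Dep f i) (x : ι → Bool) :
    f (extS S (resS S x)) = f x := by
  classical
  refine indep_agree Sᶜ (fun j hj => hind j (Finset.mem_compl.1 hj)) _ _ fun j hj => ?_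
  have hjS : j ∈ S := by simpa using hj
  simp [extS, resS, hjS]

lemma Dep_res {f : BF ι} (hind : ∀ i, i ∉ S → ¬ Dep f i) {i : ι} (hi : i ∈ S)
    (h : Dep f i) : Dep (fun y => f (extS S y)) ⟨i, hi⟩ := by
  classical
  obtain ⟨x, hx⟩ := h
  refine ⟨resS S x, ?_⟩
  have key : ∀ c, f (extS S (Function.update (resS S x) ⟨i, hi⟩ c))
      = f (Function.update x i c) := by
    intro c
    rw [extS_update]
    refine indep_agree Sᶜ (fun j hj => hind j (Finset.mem_compl.1 hj)) _ _ fun j hj => ?_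
    have hjS : j ∈ S := by simpa using hj
    rcases eq_or_ne j i with rfl | hji
    · simp
    · simp [Function.update, hji, extS, resS, hjS]
  show f (extS S (Function.update (resS S x) ⟨i, hi⟩ true))
      ≠ f (extS S (Function.update (resS S x) ⟨i, hi⟩ false))
  rw [key true, key false]
  exact hx

lemma Dep_ext_iff {h : BF {i // i ∈ S}} (i : ι) :
    Dep (fun x => h (resS S x)) i ↔ ∃ hi : i ∈ S, Dep h ⟨i, hi⟩ := by
  constructor
  · rintro ⟨x, hx⟩
    by_cases hi : i ∈ S
    · refine ⟨hi, resS S x, ?_⟩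
      rw [← resS_update_mem x hi true, ← resS_update_mem x hi false]
      exact hx
    · exfalso
      apply hx
      show h (resS S (Function.update x i true)) = h (resS S (Function.update x i false))
      rw [resS_update_not_mem x hi true, resS_update_not_mem x hi false]
  · rintro ⟨hi, y, hy⟩
    refine ⟨extS S y, ?_⟩
    show h (resS S (Function.update (extS S y) i true))
        ≠ h (resS S (Function.update (extS S y) i false))
    rw [resS_update_mem _ hi, resS_update_mem _ hi, resS_extS]
    exact hy

/-! ### The fiber equivalence for dependency sets -/

lemma fiber_card (b : Bool) (S : Finset ι) :
    Nat.card {f : BF ι // LTFb b f ∧ ∀ i, (Dep f i ↔ i ∈ S)} =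
      Nat.card {h : BF {i // i ∈ S} // LTFb b h ∧ ∀ j, Dep h j} := by
  classical
  refine Nat.card_congr ?_
  refine
    { toFun := fun f => ⟨fun y => f.1 (extS S y), LTFb_res f.2.1 S, fun j =>
        Dep_res (fun i hi hd => hi ((f.2.2 i).1 hd)) j.2 ((f.2.2 j.1).2 j.2)⟩
      invFun := fun h => ⟨fun x => h.1 (resS S x), LTFb_ext h.2.1, fun i => ?_⟩
      left_inv := fun f => ?_
      right_inv := fun h => ?_ }
  · rw [Dep_ext_iff]
    constructor
    · rintro ⟨hi, _⟩; exact hi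
    · intro hi; exact ⟨hi, h.2.2 ⟨i, hi⟩⟩
  · ext x
    exact ext_res_eq (fun i hi hd => hi ((f.2.2 i).1 hd)) x
  · ext y
    show h.1 (resS S (extS S y)) = h.1 y
    rw [resS_extS]

/-! ### Partition by a Finset statistic -/

lemma card_partition (P : BF ι → Prop) (stat : BF ι → Finset ι) :
    Nat.card {f : BF ι // P f} = ∑ S : Finset ι, Nat.card {f : BF ι // P f ∧ stat f = S} := by
  classical
  have e1 : {f : BF ι // P f} ≃ Σ S : Finset ι, {f : BF ι // P f ∧ stat f = S} :=
    (Equiv.sigmaFiberEquiv (fun g : {f : BF ι // P f} => stat g.1)).symm.trans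
      (Equiv.sigmaCongrRight fun S => Equiv.subtypeSubtypeEquivSubtypeInter P (fun f => stat f = S))
  rw [Nat.card_congr e1, Nat.card_eq_fintype_card, Fintype.card_sigma]
  exact Finset.sum_congr rfl fun S _ => (Nat.card_eq_fintype_card).symm

lemma sum_card_finsets (g : ℕ → ℕ) :
    ∑ S : Finset ι, g S.card
      = ∑ k ∈ Finset.range (Fintype.card ι + 1), (Fintype.card ι).choose k * g k := by
  classical
  rw [← Finset.powerset_univ, Finset.sum_powerset_apply_card]
  simp [Finset.card_univ, smul_eq_mul]

/-! ### Transfer of the dep-on-all pattern along reindexing -/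

lemma allDep_pattern_mapF (e : ι ≃ κ) (b : Bool) (f : BF ι) :
    (LTFb b f ∧ ∀ i, Dep f i) ↔ (LTFb b (mapF e f) ∧ ∀ j, Dep (mapF e f) j) := by
  constructor
  · rintro ⟨h1, h2⟩
    refine ⟨LTFb_mapF e h1, fun j => ?_⟩
    have := Dep_mapF e (h2 (e.symm j))
    simpa using this
  · rintro ⟨h1, h2⟩
    have h1' := LTFb_mapF e.symm h1
    rw [mapF_mapF] at h1'
    refine ⟨h1', fun i => ?_⟩
    have h3 := Dep_mapF e.symm (h2 (e i))
    rw [mapF_mapF] at h3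
    simpa using h3

noncomputable def Dcnt (b : Bool) (k : ℕ) : ℕ := Nat.card {h : BF (Fin k) // LTFb b h ∧ ∀ j, Dep h j}

lemma Dcnt_eq (b : Bool) (S : Finset ι) :
    Nat.card {h : BF {i // i ∈ S} // LTFb b h ∧ ∀ j, Dep h j} = Dcnt b S.card :=
  card_mapF S.equivFin _ _ (fun f => allDep_pattern_mapF S.equivFin b f)

lemma P1 (b : Bool) :
    Nat.card {f : BF ι // LTFb b f}
      = ∑ k ∈ Finset.range (Fintype.card ι + 1), (Fintype.card ι).choose k * Dcnt b k := by
  classical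
  rw [card_partition (LTFb b) (fun f => Finset.univ.filter fun i => Dep f i)]
  rw [← sum_card_finsets (Dcnt b)]
  refine Finset.sum_congr rfl fun S _ => ?_
  rw [← Dcnt_eq b S, ← fiber_card b S]
  refine Nat.card_congr (Equiv.subtypeEquivRight fun f => ?_)
  constructor
  · rintro ⟨h1, h2⟩
    refine ⟨h1, fun i => ?_⟩
    rw [← h2]
    simp
  · rintro ⟨h1, h2⟩
    refine ⟨h1, ?_⟩
    ext i
    simp [h2 i]

/-! ### Orientation: unsigned LTFs vs monotone LTFs -/

lemma mono_of_nonneg {f : BF ι} {w θ} (hr : Rzn f w θ) (hw : ∀ i, 0 ≤ w i) {x y : ι → Bool}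
    (hxy : ∀ i, x i = true → y i = true) (hx : f x = true) : f y = true :=
  (hr y).2 (lt_of_lt_of_le ((hr x).1 hx) (dotp_mono hw hxy))

lemma flip_comp (ε1 ε2 x : ι → Bool) :
    flip ε1 (flip ε2 x) = flip (fun i => xor (ε1 i) (ε2 i)) x := by
  funext i
  cases h1 : ε1 i <;> cases h2 : ε2 i <;> cases h3 : x i <;> simp [flip, h1, h2, h3]

lemma P2 : Nat.card {f : BF ι // LTFb false f ∧ ∀ i, Dep f i}
    = 2 ^ Fintype.card ι * Nat.card {g : BF ι // LTFb true g ∧ ∀ i, Dep g i} := by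
  classical
  have e : ((ι → Bool) × {g : BF ι // LTFb true g ∧ ∀ i, Dep g i}) ≃
      {f : BF ι // LTFb false f ∧ ∀ i, Dep f i} := by
    refine Equiv.ofBijective (fun p =>
      ⟨fun x => p.2.1 (flip p.1 x), ?_, fun i => Dep_flip p.1 (p.2.2.2 i)⟩) ⟨?_, ?_⟩
    · obtain ⟨w, θ, hr, _⟩ := p.2.2.1
      exact ⟨_, _, Rzn_flip p.1 hr, by simp⟩
    · rintro ⟨ε1, g1⟩ ⟨ε2, g2⟩ h
      have hfun : (fun x => g1.1 (flip ε1 x)) = fun x => g2.1 (flip ε2 x) :=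
        congrArg Subtype.val h
      obtain ⟨w1, θ1, hr1, hw1⟩ := g1.2.1
      obtain ⟨w2, θ2, hr2, hw2⟩ := g2.2.1
      have hw1' := hw1 rfl
      have hw2' := hw2 rfl
      have hee : ε1 = ε2 := by
        funext i
        by_contra hne
        set δ : ι → Bool := fun j => xor (ε1 j) (ε2 j) with hδ
        have hδi : δ i = true := by
          simp only [hδ]
          cases h1 : ε1 i <;> cases h2 : ε2 i <;> simp_all
        have hg : ∀ x, g2.1 x = g1.1 (flip δ x) := by
          intro x
          have h3 := congrFun hfun (flip ε2 x)
          rw [flip_flip] at h3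
          rw [← h3, flip_comp]
        obtain ⟨x, hx⟩ := g2.2.2 i
        have hup : ∀ (z : ι → Bool) j, Function.update z i false j = true →
            Function.update z i true j = true := by
          intro z j hj
          rcases eq_or_ne j i with rfl | hji
          · simp
          · simpa [Function.update, hji] using hj
        have hcase : g2.1 (Function.update x i true) = true ∧
            g2.1 (Function.update x i false) = false := by
          cases htt : g2.1 (Function.update x i true) <;>
            cases hff : g2.1 (Function.update x i false)
          · exact absurd (htt.trans hff.symm) hx
          · exact absurd (mono_of_nonneg hr2 hw2' (hup x) hff) (by simp [htt])
          · exact ⟨rfl, rfl⟩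
          · exact absurd (htt.trans hff.symm) hx
        have e1 : g1.1 (Function.update (flip δ x) i false) = true := by
          have h4 := hg (Function.update x i true)
          rw [flip_update, hδi] at h4
          simp only [Bool.xor_self] at h4
          rw [← h4]; exact hcase.1
        have e2 : g1.1 (Function.update (flip δ x) i true) = false := by
          have h4 := hg (Function.update x i false)
          rw [flip_update, hδi] at h4
          simp only [Bool.false_xor] at h4
          rw [← h4]; exact hcase.2
        exact absurd (mono_of_nonneg hr1 hw1' (hup (flip δ x)) e1) (by simp [e2])
      subst hee
      have hgg : g1 = g2 := by
        refine Subtype.ext (funext fun z => ?_)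
        have h3 := congrFun hfun (flip ε1 z)
        rwa [flip_flip] at h3
      rw [hgg]
    · rintro ⟨f, hf, hdep⟩
      obtain ⟨w, θ, hr, -⟩ := hf
      set ε : ι → Bool := fun i => decide (w i < 0) with hε
      refine ⟨⟨ε, ⟨fun x => f (flip ε x), ?_, fun i => Dep_flip ε (hdep i)⟩⟩, ?_⟩
      · refine ⟨_, _, Rzn_flip ε hr, fun _ i => ?_⟩
        by_cases h : w i < 0 <;> simp [hε, h] <;> linarith
      · refine Subtype.ext (funext fun x => ?_)
        show f (flip ε (flip ε x)) = f x
        rw [flip_flip]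
  rw [← Nat.card_congr e, Nat.card_prod, Nat.card_eq_fintype_card (α := ι → Bool),
    Fintype.card_fun]
  simp

lemma P2' (k : ℕ) : Dcnt false k = 2 ^ k * Dcnt true k := by
  have := P2 (ι := Fin k)
  simpa [Dcnt] using this

/-! ### Partition of monotone LTFs by unit-vector values -/

lemma unit_true_all {g : BF ι} {w θ} (hr : Rzn g w θ) (hw : ∀ i, 0 ≤ w i)
    {i : ι} (hi : g (unit i) = true) {x : ι → Bool} (hx : x i = true) : g x = true :=
  mono_of_nonneg hr hw (fun j hj => by
    have hji : j = i := by simpa [unit] using hj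
    rwa [hji]) hi

lemma extS_unit (j : {i // i ∈ S}) : extS S (unit j) = unit (j.1 : ι) := by
  funext i
  by_cases hi : i ∈ S
  · simp [extS, unit, hi, Subtype.ext_iff]
  · have hne : i ≠ j.1 := fun h => hi (h ▸ j.2)
    simp [extS, unit, hi, hne]

lemma resS_unit {i : ι} (hi : i ∈ S) : resS S (unit i) = unit (⟨i, hi⟩ : {i // i ∈ S}) := by
  funext j
  simp [resS, unit, Subtype.ext_iff]

lemma fiber4_card (T : Finset ι) :
    Nat.card {g : BF ι // LTFb true g ∧ ∀ i, (g (unit i) = true ↔ i ∈ T)}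
      = Nat.card {h : BF {i // i ∈ Tᶜ} // SGw h} := by
  classical
  set S := Tᶜ with hS
  have hmem : ∀ i : ι, i ∈ S ↔ i ∉ T := fun i => Finset.mem_compl
  set G : {h : BF {i // i ∈ S} // SGw h} → BF ι :=
    fun h => fun x => if ∃ i ∈ T, x i = true then true else h.1 (resS S x) with hG
  have hGT : ∀ h x, (∃ i ∈ T, x i = true) → G h x = true := by
    intro h x hx; simp [hG, hx]
  have hGS : ∀ h x, ¬ (∃ i ∈ T, x i = true) → G h x = h.1 (resS S x) := by
    intro h x hx; simp [hG, hx]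
  refine (Nat.card_congr (Equiv.ofBijective (fun h => (⟨G h, ?_, ?_⟩ :
      {g : BF ι // LTFb true g ∧ ∀ i, (g (unit i) = true ↔ i ∈ T)})) ⟨?_, ?_⟩)).symm
  · -- LTFb true (G h)
    obtain ⟨w, θ, hr, hw⟩ := h.2.1
    have hw' := hw rfl
    refine ⟨fun i => if hiT : i ∈ T then |θ| + 1 else w ⟨i, (hmem i).2 hiT⟩, θ,
      fun x => ?_, fun _ i => ?_⟩
    · by_cases hx : ∃ i ∈ T, x i = true
      · rw [hGT h x hx]
        obtain ⟨i, hiT, hxi⟩ := hx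
        have h1 : dotp (fun i => if hiT : i ∈ T then |θ| + 1 else w ⟨i, (hmem i).2 hiT⟩) (unit i)
            ≤ dotp (fun i => if hiT : i ∈ T then |θ| + 1 else w ⟨i, (hmem i).2 hiT⟩) x := by
          refine dotp_mono (fun j => ?_) (fun j hj => ?_)
          · by_cases hjT : j ∈ T
            · simp only [dif_pos hjT]; positivity
            · simp only [dif_neg hjT]; exact hw' _
          · have hji : j = i := by simpa [unit] using hj
            rwa [hji]
        rw [dotp_unit, dif_pos hiT] at h1
        have h2 : θ < |θ| + 1 := lt_of_le_of_lt (le_abs_self θ) (by linarith)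
        simp only [true_iff]
        linarith
      · rw [hGS h x hx]
        push_neg at hx
        have hxoff : ∀ i ∉ S, x i = false := by
          intro i hi
          have hiT : i ∈ T := by
            by_contra hiT
            exact hi ((hmem i).2 hiT)
          simpa using hx i hiT
        have hdot : dotp (fun i => if hiT : i ∈ T then |θ| + 1 else w ⟨i, (hmem i).2 hiT⟩) x
            = dotp w (resS S x) := by
          rw [dotp_falseOff _ x hxoff]
          refine congrArg (fun v => dotp v (resS S x)) (funext fun j => ?_)
          have hjT : (j : ι) ∉ T := (hmem j.1).1 j.2
          simp only [dif_neg hjT]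
        rw [hdot]
        exact hr (resS S x)
    · by_cases hiT : i ∈ T
      · simp only [dif_pos hiT]; positivity
      · simp only [dif_neg hiT]; exact hw' _
  · -- fiber condition
    intro i
    by_cases hiT : i ∈ T
    · have : G h (unit i) = true := hGT h _ ⟨i, hiT, by simp [unit]⟩
      simp [this, hiT]
    · have hni : ¬ (∃ j ∈ T, unit i j = true) := by
        rintro ⟨j, hjT, hj⟩
        have : j = i := by simpa [unit] using hj
        exact hiT (this ▸ hjT)
      have : G h (unit i) = h.1 (resS S (unit i)) := hGS h _ hni
      rw [this, resS_unit ((hmem i).2 hiT), h.2.2]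
      simp [hiT]
  · -- injective
    intro h1 h2 hh
    have hfun : G h1 = G h2 := congrArg Subtype.val hh
    refine Subtype.ext (funext fun y => ?_)
    have hno : ∀ (y : {i // i ∈ S} → Bool), ¬ (∃ i ∈ T, extS S y i = true) := by
      rintro y ⟨i, hiT, hi⟩
      have hiS : i ∉ S := fun hiS => (hmem i).1 hiS hiT
      simp [extS, hiS] at hi
    have e1 := hGS h1 (extS S y) (hno y)
    have e2 := hGS h2 (extS S y) (hno y)
    rw [resS_extS] at e1 e2
    rw [← e1, ← e2, hfun]
  · -- surjective
    rintro ⟨g, hg, hfib⟩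
    obtain ⟨w, θ, hr, hw⟩ := hg
    have hw' := hw rfl
    have hSGw : SGw (fun y => g (extS S y)) := by
      refine ⟨LTFb_res ⟨w, θ, hr, hw⟩ S, fun j => ?_⟩
      show g (extS S (unit j)) = false
      rw [extS_unit j]
      have : (j : ι) ∉ T := (hmem j.1).1 j.2
      have h3 := hfib j.1
      simp only [this, iff_false] at h3
      simpa using h3
    refine ⟨⟨fun y => g (extS S y), hSGw⟩, Subtype.ext (funext fun x => ?_)⟩
    show G ⟨fun y => g (extS S y), hSGw⟩ x = g x
    by_cases hx : ∃ i ∈ T, x i = true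
    · obtain ⟨i, hiT, hxi⟩ := hx
      have hgx : g x = true := unit_true_all hr hw' ((hfib i).2 hiT) hxi
      rw [hGT _ x ⟨i, hiT, hxi⟩, hgx]
    · rw [hGS _ x hx]
      push_neg at hx
      show g (extS S (resS S x)) = g x
      refine congrArg g (funext fun i => ?_)
      by_cases hiS : i ∈ S
      · simp [extS, resS, hiS]
      · have hiT : i ∈ T := by
          by_contra hiT
          exact hiS ((hmem i).2 hiT)
        have : x i = false := by simpa using hx i hiT
        simp [extS, hiS, this]

noncomputable def Gcnt (k : ℕ) : ℕ := Nat.card {h : BF (Fin k) // SGw h}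

lemma SGw_pattern_mapF (e : ι ≃ κ) (f : BF ι) : SGw f ↔ SGw (mapF e f) :=
  ⟨SGw_mapF e, fun h => by have h2 := SGw_mapF e.symm h; rwa [mapF_mapF] at h2⟩

lemma Gcnt_eq (S : Finset ι) :
    Nat.card {h : BF {i // i ∈ S} // SGw h} = Gcnt S.card :=
  card_mapF S.equivFin _ _ (SGw_pattern_mapF S.equivFin)

lemma P4 : Nat.card {f : BF ι // LTFb true f}
    = ∑ k ∈ Finset.range (Fintype.card ι + 1), (Fintype.card ι).choose k * Gcnt k := by
  classical
  rw [card_partition (LTFb true) (fun g => Finset.univ.filter fun i => g (unit i) = true)]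
  have h1 : ∀ T : Finset ι,
      Nat.card {f : BF ι // LTFb true f ∧ (Finset.univ.filter fun i => f (unit i) = true) = T}
        = Gcnt Tᶜ.card := by
    intro T
    rw [← Gcnt_eq (Tᶜ), ← fiber4_card T]
    refine Nat.card_congr (Equiv.subtypeEquivRight fun f => ?_)
    constructor
    · rintro ⟨hf, h2⟩
      refine ⟨hf, fun i => ?_⟩
      rw [← h2]
      simp
    · rintro ⟨hf, h2⟩
      refine ⟨hf, ?_⟩
      ext i
      simp [h2 i]
  rw [Finset.sum_congr rfl fun T _ => h1 T]
  have h2 : ∑ T : Finset ι, Gcnt Tᶜ.card = ∑ T : Finset ι, Gcnt T.card :=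
    Fintype.sum_bijective _ (Function.Involutive.bijective (fun T : Finset ι => compl_compl T))
      _ _ (fun T => rfl)
  rw [h2, sum_card_finsets Gcnt]

lemma P5 (k : ℕ) : Dcnt true k = Gcnt k := by
  induction k using Nat.strong_induction_on with
  | _ k ih =>
    have h1 := P1 (ι := Fin k) true
    have h2 := P4 (ι := Fin k)
    simp only [Fintype.card_fin] at h1 h2
    have h3 : ∑ j ∈ Finset.range (k + 1), k.choose j * Dcnt true j
        = ∑ j ∈ Finset.range (k + 1), k.choose j * Gcnt j := h1.symm.trans h2
    rw [Finset.sum_range_succ, Finset.sum_range_succ,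
      Finset.sum_congr rfl (fun j hj => by rw [ih j (Finset.mem_range.1 hj)])] at h3
    have h4 := Nat.add_left_cancel h3
    simpa using h4

end SGA

/-! ### Bridge to the original definitions -/

open SGA in
lemma isLTF_iff_LTFb {n : ℕ} (f : (Fin n → Bool) → Bool) : IsLTF f ↔ LTFb false f := by
  constructor
  · rintro ⟨w, θ, hr⟩
    exact ⟨w, θ, hr, by simp⟩
  · rintro ⟨w, θ, hr, -⟩
    exact ⟨w, θ, hr⟩

open SGA in
lemma semiGoldilocks_iff_SGw {n : ℕ} (f : (Fin n → Bool) → Bool) :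
    SemiGoldilocks f ↔ SGw f := by
  constructor
  · rintro ⟨hltf, ⟨w, θ, hr, hpos⟩, ⟨w', θ', hr', hsm⟩⟩
    refine ⟨⟨w, θ, hr, fun _ i => (hpos i).le⟩, fun i => ?_⟩
    have hnot : ¬ (f (unit i) = true) := by
      intro ht
      have h1 : θ' < dotp w' (unit i) := (hr' (unit i)).1 ht
      rw [dotp_unit] at h1
      exact absurd h1 (not_lt.2 (hsm i))
    simpa using hnot
  · rintro ⟨⟨w, θ, hr, hw⟩, hu⟩
    have hw' := hw rfl
    obtain ⟨u, θ', hr2, hlt⟩ := bump hr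
    refine ⟨⟨w, θ, hr⟩, ⟨u, θ', hr2, fun i => lt_of_le_of_lt (hw' i) (hlt i)⟩,
      ⟨u, θ', hr2, fun i => ?_⟩⟩
    have hnot : ¬ (θ' < dotp u (unit i)) := by
      intro h1
      have := (hr2 (unit i)).2 h1
      rw [hu i] at this
      exact Bool.false_ne_true this
    rw [dotp_unit] at hnot
    exact not_lt.1 hnot

open SGA in
lemma SGoldCount_eq (k : ℕ) : SGoldCount k = Gcnt k := by
  rw [SGoldCount, ← Nat.card_coe_set_eq]
  exact Nat.card_congr (Equiv.subtypeEquivRight fun f => semiGoldilocks_iff_SGw f)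

open SGA in
lemma LTFcount_eq (n : ℕ) : LTFcount n = Nat.card {f : (Fin n → Bool) → Bool // LTFb false f} := by
  rw [LTFcount, ← Nat.card_coe_set_eq]
  exact Nat.card_congr (Equiv.subtypeEquivRight fun f => isLTF_iff_LTFb f)

open SGA in
/-- `LTF(n) = ∑_{k=0}^{n} binom(n, k) · 2^k · SGold(k)`. -/
theorem stmt_19 (n : ℕ) :
    LTFcount n = ∑ k ∈ Finset.range (n + 1), Nat.choose n k * 2 ^ k * SGoldCount k := by
  rw [LTFcount_eq, P1 (ι := Fin n) false]
  simp only [Fintype.card_fin]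
  refine Finset.sum_congr rfl fun k _ => ?_
  rw [P2' k, P5 k, ← SGoldCount_eq k, mul_assoc]
end
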